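/- arXiv:1804.07413 — 2 statements merged into one kernel-verified Lean document; each statement's English description precedes it below -/
import Mathlib

section
/- For every s, t ∈ [0,1] with s ≤ t and every R > (t−s)/2 there exist analytic functions h and q on 𝔻 with h'(z) ≠ 0 for all z ∈ 𝔻 such that sup_{z∈𝔻} (1−|z|²)²|Sh(z)| = 2s, q(z)² = R·z² for all z ∈ 𝔻, and the harmonic mapping f = h + conj(g) with dilatation ω = q² satisfies Φ_f(0) = 2s + 4R > 2t. -/
open Complex Metric ComplexConjugate

/-- The Schwarzian derivative `SF = (F''/F')' - (1/2)(F''/F')^2`. -/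
noncomputable def schwarzian (F : ℂ → ℂ) (z : ℂ) : ℂ :=
  deriv (fun w => deriv (deriv F) w / deriv F w) z
    - (1 / 2) * (deriv (deriv F) z / deriv F z) ^ 2

/-- The Schwarzian derivative of the harmonic mapping `f = h + conj g` with
dilatation `ω = g'/h' = q^2`:
`Sf = Sh + (2 conj q/(1+|q|²))·(q'' - q'·h''/h') - 4(q' conj q/(1+|q|²))²`. -/
noncomputable def Sharm (h q : ℂ → ℂ) (z : ℂ) : ℂ :=
  schwarzian h z
    + (2 * conj (q z) / (1 + ((‖q z‖ : ℂ)) ^ 2)) *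
        (deriv (deriv q) z - deriv q z * (deriv (deriv h) z / deriv h z))
    - 4 * (deriv q z * conj (q z) / (1 + ((‖q z‖ : ℂ)) ^ 2)) ^ 2

/-- `Φ_f(z) = |Sf(z)| + 4|q'(z)|²/(1+|q(z)|²)²` for `f = h + conj g`, `ω = q²`. -/
noncomputable def PhiHarm (h q : ℂ → ℂ) (z : ℂ) : ℝ :=
  ‖Sharm h q z‖
    + 4 * ‖deriv q z‖ ^ 2 / (1 + ‖q z‖ ^ 2) ^ 2

lemma key (s t R : ℝ) (hs0 : 0 ≤ s) (hst : s ≤ t) (hR : (t - s) / 2 < R)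
    (a : ℂ) (ha : a ^ 2 = -(4 * (s : ℂ)))
    (h g : ℂ → ℂ)
    (hh : ∀ z, HasDerivAt h (Complex.exp (a * z)) z)
    (hg : ∀ z, HasDerivAt g ((R : ℂ) * z ^ 2 * Complex.exp (a * z)) z)
    (hg0 : g 0 = 0) :
    ∃ h q g : ℂ → ℂ,
      AnalyticOnNhd ℂ h (ball 0 1) ∧ AnalyticOnNhd ℂ q (ball 0 1) ∧
      AnalyticOnNhd ℂ g (ball 0 1) ∧
      (∀ z ∈ ball (0 : ℂ) 1, deriv h z ≠ 0) ∧
      sSup ((fun z => (1 - ‖z‖ ^ 2) ^ 2 * ‖schwarzian h z‖) ''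
        ball (0 : ℂ) 1) = 2 * s ∧
      (∀ z ∈ ball (0 : ℂ) 1, (q z) ^ 2 = (R : ℂ) * z ^ 2) ∧
      g 0 = 0 ∧
      (∀ z ∈ ball (0 : ℂ) 1, deriv g z = (q z) ^ 2 * deriv h z) ∧
      PhiHarm h q 0 = 2 * s + 4 * R ∧ 2 * t < 2 * s + 4 * R := by
  have hR0 : 0 < R := lt_of_le_of_lt (by linarith) hR
  set c : ℂ := ((Real.sqrt R : ℝ) : ℂ) with hc
  have hc2 : c ^ 2 = (R : ℂ) := by
    rw [hc]; norm_cast; exact Real.sq_sqrt hR0.le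
  have hd : deriv h = fun w => Complex.exp (a * w) := funext fun z => (hh z).deriv
  have hdd : ∀ z, deriv (deriv h) z = a * Complex.exp (a * z) := by
    intro z
    rw [hd]
    have h1 : HasDerivAt (fun w => Complex.exp (a * w)) (Complex.exp (a * z) * (a * 1)) z :=
      ((hasDerivAt_id z).const_mul a).cexp
    rw [h1.deriv]; ring
  have e2 : ∀ w, deriv (deriv h) w / deriv h w = a := by
    intro w
    rw [hdd w, hd, mul_div_assoc, div_self (Complex.exp_ne_zero _), mul_one]
  have hS : ∀ z, schwarzian h z = 2 * (s : ℂ) := by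
    intro z
    unfold schwarzian
    rw [show (fun w => deriv (deriv h) w / deriv h w) = fun _ : ℂ => a from funext e2,
      deriv_const, e2 z, ha]
    ring
  have habs : ‖(2 * (s : ℂ))‖ = 2 * s := by
    rw [show (2 : ℂ) * (s : ℂ) = ((2 * s : ℝ) : ℂ) by push_cast; ring, Complex.norm_real, Real.norm_eq_abs]
    exact _root_.abs_of_nonneg (by linarith)
  have hqd : ∀ z : ℂ, deriv (fun w : ℂ => c * w) z = c := by
    intro z
    simpa using ((hasDerivAt_id z).const_mul c).deriv
  refine ⟨h, fun z => c * z, g, ?_, ?_, ?_, ?_, ?_, ?_, hg0, ?_, ?_, ?_⟩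
  · exact (DifferentiableOn.analyticOnNhd
      (fun z _ => ((hh z).differentiableAt).differentiableWithinAt) isOpen_ball)
  · exact (DifferentiableOn.analyticOnNhd
      (fun z _ => ((differentiable_id.const_mul c) z).differentiableWithinAt) isOpen_ball)
  · exact (DifferentiableOn.analyticOnNhd
      (fun z _ => ((hg z).differentiableAt).differentiableWithinAt) isOpen_ball)
  · intro z _
    rw [(hh z).deriv]
    exact Complex.exp_ne_zero _
  · apply IsGreatest.csSup_eq
    constructor
    · refine ⟨0, by simp, ?_⟩
      simp [hS 0, habs, hs0]
    · rintro x ⟨z, hz, rfl⟩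
      have hz1 : ‖z‖ < 1 := by
        simpa [Complex.dist_eq] using mem_ball.mp hz
      have hz0 : (0 : ℝ) ≤ ‖z‖ := norm_nonneg z
      simp only [hS z, habs]
      have hA : ‖z‖ ^ 2 ≤ 1 := by nlinarith
      have hA0 : (0 : ℝ) ≤ ‖z‖ ^ 2 := sq_nonneg _
      have h1 : (1 - ‖z‖ ^ 2) ^ 2 ≤ 1 := by nlinarith
      have h2 : (0 : ℝ) ≤ 2 * s := by linarith
      nlinarith
  · intro z _
    rw [mul_pow, hc2]
  · intro z _
    rw [(hg z).deriv, mul_pow, hc2, hd]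
  · unfold PhiHarm Sharm
    simp only [mul_zero, map_zero, hqd, hS 0]
    have hcabs : ‖c‖ = Real.sqrt R := by
      rw [hc, Complex.norm_real, Real.norm_eq_abs]
      exact _root_.abs_of_nonneg (Real.sqrt_nonneg R)
    rw [hcabs]
    simp [habs, Real.sq_sqrt hR0.le, hs0]
  · linarith

theorem stmt_2 (s t R : ℝ) (hs : s ∈ Set.Icc (0 : ℝ) 1) (ht : t ∈ Set.Icc (0 : ℝ) 1)
    (hst : s ≤ t) (hR : (t - s) / 2 < R) :
    ∃ h q g : ℂ → ℂ,
      AnalyticOnNhd ℂ h (ball 0 1) ∧ AnalyticOnNhd ℂ q (ball 0 1) ∧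
      AnalyticOnNhd ℂ g (ball 0 1) ∧
      (∀ z ∈ ball (0 : ℂ) 1, deriv h z ≠ 0) ∧
      sSup ((fun z => (1 - ‖z‖ ^ 2) ^ 2 * ‖schwarzian h z‖) ''
        ball (0 : ℂ) 1) = 2 * s ∧
      (∀ z ∈ ball (0 : ℂ) 1, (q z) ^ 2 = (R : ℂ) * z ^ 2) ∧
      g 0 = 0 ∧
      (∀ z ∈ ball (0 : ℂ) 1, deriv g z = (q z) ^ 2 * deriv h z) ∧
      PhiHarm h q 0 = 2 * s + 4 * R ∧ 2 * t < 2 * s + 4 * R := by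
  rcases eq_or_lt_of_le hs.1 with h0 | h0
  · -- s = 0
    refine key s t R hs.1 hst hR 0 (by rw [← h0]; norm_num) (fun z => z)
      (fun z => (R : ℂ) / 3 * z ^ 3) (fun z => ?_) (fun z => ?_) (by simp)
    · simp only [zero_mul, Complex.exp_zero]; exact hasDerivAt_id' z
    · have := (hasDerivAt_pow 3 z).const_mul ((R : ℂ) / 3)
      refine this.congr_deriv ?_
      simp; ring
  · -- s > 0
    set a : ℂ := 2 * ((Real.sqrt s : ℝ) : ℂ) * I with haeq
    have hss : ((Real.sqrt s : ℝ) : ℂ) ^ 2 = (s : ℂ) := by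
      norm_cast; exact Real.sq_sqrt hs.1
    have ha : a ^ 2 = -(4 * (s : ℂ)) := by
      rw [haeq, mul_pow, mul_pow, I_sq, hss]
      ring
    have ha0 : a ≠ 0 := by
      rw [haeq]
      refine mul_ne_zero (mul_ne_zero two_ne_zero ?_) I_ne_zero
      exact_mod_cast (Real.sqrt_pos.2 h0).ne'
    refine key s t R hs.1 hst hR a ha
      (fun z => a⁻¹ * Complex.exp (a * z))
      (fun z => (R : ℂ) / a ^ 3 * (((a * z) ^ 2 - 2 * (a * z) + 2) * Complex.exp (a * z))
        - 2 * (R : ℂ) / a ^ 3)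
      (fun z => ?_) (fun z => ?_) (by simp; ring)
    · have h1 : HasDerivAt (fun z => a⁻¹ * Complex.exp (a * z))
        (a⁻¹ * (Complex.exp (a * z) * (a * 1))) z :=
        (((hasDerivAt_id z).const_mul a).cexp).const_mul a⁻¹
      convert h1 using 1
      field_simp
    · have hu : HasDerivAt (fun w : ℂ => a * w) (a * 1) z := (hasDerivAt_id z).const_mul a
      have hp : HasDerivAt (fun w : ℂ => (a * w) ^ 2 - 2 * (a * w) + 2)
          (2 * (a * z) ^ 1 * (a * 1) - 2 * (a * 1)) z :=
        ((hu.pow 2).sub (hu.const_mul 2)).add_const 2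
      have he : HasDerivAt (fun w : ℂ => Complex.exp (a * w))
          (Complex.exp (a * z) * (a * 1)) z := hu.cexp
      have h2 := ((hp.mul he).const_mul ((R : ℂ) / a ^ 3)).sub_const (2 * (R : ℂ) / a ^ 3)
      refine h2.congr_deriv ?_
      field_simp
      ring
end

section
/- Let Ω ⊊ ℂ be a simply connected domain, φ : 𝔻 → Ω an injective analytic map of 𝔻 onto Ω, and λ ∈ 𝕋 a direction with M(λ) < ∞. Let ε be a real number with 0 ≤ ε < 1/(2·M(λ) + 1), and let h, g be analytic functions on 𝔻 satisfying h − λ²g = φ and |g'(z)| ≤ ε·|h'(z)| for all z ∈ 𝔻. Then the harmonic mapping f = h + conj(g) is injective on 𝔻. -/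
open Complex Metric ComplexConjugate ENNReal

open Filter Topology

/-- `ℓ(z,w)`: the infimum of the lengths of curves joining `z` to `w` inside `Ω`
(`⊤` if no such curve exists). Lengths are measured by the total variation
of a parametrization over `[0,1]`. -/
noncomputable def pathLengthInf (Ω : Set ℂ) (z w : ℂ) : ℝ≥0∞ :=
  ⨅ (γ : ℝ → ℂ) (_ : ContinuousOn γ (Set.Icc 0 1)) (_ : γ 0 = z) (_ : γ 1 = w)
    (_ : Set.MapsTo γ (Set.Icc 0 1) Ω), eVariationOn γ (Set.Icc 0 1)

/-- The directional chord-arc constant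
`M(λ) = sup { ℓ(z,w)/|z-w| : z, w ∈ Ω, z ≠ w, conj(λ)(z-w) ∈ ℝ }`. -/
noncomputable def Mdir (Ω : Set ℂ) (lam : ℂ) : ℝ≥0∞ :=
  ⨆ (z : ℂ) (w : ℂ) (_ : z ∈ Ω) (_ : w ∈ Ω) (_ : z ≠ w)
    (_ : (conj lam * (z - w)).im = 0),
    pathLengthInf Ω z w / ENNReal.ofReal (‖z - w‖)

/-- Key estimate: if `ψ` has derivative of norm `≤ k` at every point of an open set `U`,
and `γ` is a continuous curve in `U`, then the distance between endpoint images is bounded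
by `k` times the total variation of `γ`. -/
lemma curve_bound {U : Set ℂ} (hU : IsOpen U) {ψ : ℂ → ℂ} {k : ℝ}
    (hψ : ∀ w ∈ U, ∃ d : ℂ, HasDerivAt ψ d w ∧ ‖d‖ ≤ k)
    {γ : ℝ → ℂ} (hγc : ContinuousOn γ (Set.Icc 0 1))
    (hmaps : Set.MapsTo γ (Set.Icc 0 1) U) :
    edist (ψ (γ 1)) (ψ (γ 0)) ≤ ENNReal.ofReal k * eVariationOn γ (Set.Icc 0 1) := by
  classical
  have h01 : (0:ℝ) ∈ Set.Icc (0:ℝ) 1 := by norm_num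
  have h11 : (1:ℝ) ∈ Set.Icc (0:ℝ) 1 := by norm_num
  have hk : 0 ≤ k := le_trans (norm_nonneg _) (hψ _ (hmaps h01)).choose_spec.2
  have hKc : IsCompact (γ '' Set.Icc 0 1) := isCompact_Icc.image_of_continuousOn hγc
  obtain ⟨r, hr, hrU⟩ := hKc.exists_thickening_subset_open hU (Set.image_subset_iff.mpr hmaps)
  have huc : UniformContinuousOn γ (Set.Icc 0 1) :=
    isCompact_Icc.uniformContinuousOn_of_continuous hγc
  rw [Metric.uniformContinuousOn_iff] at huc
  obtain ⟨d, hd, hdd⟩ := huc r hr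
  obtain ⟨n, hn⟩ := exists_nat_one_div_lt hd
  set δ : ℝ := 1 / (n + 1 : ℝ) with hδ
  have hδ0 : 0 < δ := by positivity
  set u : ℕ → ℝ := fun i => min (i * δ) 1 with hu
  have humono : Monotone u := fun i j hij => by
    apply min_le_min _ le_rfl
    have : (i:ℝ) ≤ j := by exact_mod_cast hij
    nlinarith
  have humem : ∀ i, u i ∈ Set.Icc (0:ℝ) 1 := by
    intro i
    constructor
    · apply le_min (by positivity) (by norm_num)
    · exact min_le_right _ _
  have hu0 : u 0 = 0 := by simp [hu]
  have huN : u (n+1) = 1 := by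
    have : ((n:ℝ)+1) * δ = 1 := by rw [hδ]; field_simp
    simp only [hu]
    push_cast
    rw [this]
    norm_num
  have hstep' : ∀ i : ℕ, u (i+1) - u i ≤ δ := by
    intro i
    have h1 : ((i:ℝ)+1) * δ = i * δ + δ := by ring
    rcases le_total ((i:ℝ) * δ) 1 with h2 | h2
    · rcases le_total (((i:ℝ)+1) * δ) 1 with h3 | h3
      · simp only [hu]
        push_cast
        rw [min_eq_left, min_eq_left h2] <;> push_cast at h3 ⊢ <;> nlinarith
      · simp only [hu]
        push_cast
        rw [min_eq_right, min_eq_left h2] <;> push_cast at h3 ⊢ <;> nlinarith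
    · simp only [hu]
      push_cast
      rw [min_eq_right (by nlinarith), min_eq_right h2]
      nlinarith
  have hclose : ∀ i : ℕ, dist (u (i+1)) (u i) < d := by
    intro i
    rw [Real.dist_eq, _root_.abs_of_nonneg (by linarith [humono (Nat.le_succ i)] : (0:ℝ) ≤ u (i+1) - u i)]
    exact lt_of_le_of_lt (hstep' i) hn
  set ψd : ℂ → ℂ := fun x => if hx : x ∈ U then (hψ x hx).choose else 0 with hψd
  have hψd' : ∀ x ∈ U, HasDerivAt ψ (ψd x) x ∧ ‖ψd x‖ ≤ k := by
    intro x hx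
    simp only [hψd, dif_pos hx]
    exact (hψ x hx).choose_spec
  have step : ∀ i : ℕ, dist (ψ (γ (u (i+1)))) (ψ (γ (u i))) ≤ k * dist (γ (u (i+1))) (γ (u i)) := by
    intro i
    have hball : Metric.ball (γ (u i)) r ⊆ U :=
      (ball_subset_thickening (Set.mem_image_of_mem _ (humem i)) r).trans hrU
    have hmem1 : γ (u i) ∈ Metric.ball (γ (u i)) r := mem_ball_self hr
    have hmem2 : γ (u (i+1)) ∈ Metric.ball (γ (u i)) r := by
      rw [mem_ball]
      exact hdd _ (humem (i+1)) _ (humem i) (hclose i)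
    have := Convex.norm_image_sub_le_of_norm_deriv_le (f := ψ) (s := Metric.ball (γ (u i)) r)
      (fun x hx => ((hψd' x (hball hx)).1).differentiableAt)
      (fun x hx => by
        have h1 := (hψd' x (hball hx)).1.deriv
        rw [h1]
        exact (hψd' x (hball hx)).2)
      (convex_ball _ _) hmem1 hmem2
    simpa [dist_eq_norm] using this
  calc edist (ψ (γ 1)) (ψ (γ 0))
      = edist ((fun i => ψ (γ (u i))) 0) ((fun i => ψ (γ (u i))) (n+1)) := by
        rw [edist_comm]; simp [hu0, huN]
    _ ≤ ∑ i ∈ Finset.range (n+1), edist (ψ (γ (u i))) (ψ (γ (u (i+1)))) :=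
        edist_le_range_sum_edist (fun i => ψ (γ (u i))) (n+1)
    _ ≤ ∑ i ∈ Finset.range (n+1), ENNReal.ofReal k * edist (γ (u (i+1))) (γ (u i)) := by
        apply Finset.sum_le_sum
        intro i _
        rw [edist_comm, edist_dist, edist_dist, ← ENNReal.ofReal_mul hk]
        exact ENNReal.ofReal_le_ofReal (step i)
    _ = ENNReal.ofReal k * ∑ i ∈ Finset.range (n+1), edist (γ (u (i+1))) (γ (u i)) := by
        rw [Finset.mul_sum]
    _ ≤ ENNReal.ofReal k * eVariationOn γ (Set.Icc 0 1) := by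
        apply mul_le_mul_right
        exact eVariationOn.sum_le (f := γ) (n := n+1) humono humem

/-- An injective analytic map on the disk has nonvanishing derivative. -/
lemma deriv_ne_zero_of_injOn {φ : ℂ → ℂ} (hφa : AnalyticOnNhd ℂ φ (ball 0 1))
    (hφi : Set.InjOn φ (ball 0 1)) {z₀ : ℂ} (hz₀ : z₀ ∈ ball (0:ℂ) 1) :
    deriv φ z₀ ≠ 0 := by
  intro hd0
  set F : ℂ → ℂ := fun z => φ z - φ z₀ with hF
  have hFa : AnalyticAt ℂ F z₀ := (hφa z₀ hz₀).sub analyticAt_const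
  have hDn : ∀ᶠ z in 𝓝 z₀, z ∈ ball (0:ℂ) 1 := isOpen_ball.mem_nhds hz₀
  have hnot : ¬ ∀ᶠ z in 𝓝 z₀, F z = 0 := by
    intro hev
    have h2 : ∀ᶠ z in 𝓝[≠] z₀, z ∈ ball (0:ℂ) 1 ∧ F z = 0 :=
      nhdsWithin_le_nhds (hDn.and hev)
    obtain ⟨z, ⟨hzD, hzφ⟩, hzne⟩ := (h2.and self_mem_nhdsWithin).exists
    have : φ z = φ z₀ := by
      have := hzφ; simp only [hF, sub_eq_zero] at this; exact this
    exact hzne (hφi hzD hz₀ this)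
  obtain ⟨n, q, hqa, hq0, hqev⟩ := hFa.exists_eventuallyEq_pow_smul_nonzero_iff.mpr hnot
  have hFz₀ : F z₀ = 0 := by simp [hF]
  have hn1 : 1 ≤ n := by
    rcases Nat.eq_zero_or_pos n with h0 | h
    case inr => exact h
    · exfalso
      have := hqev.self_of_nhds
      rw [hFz₀, h0] at this
      simp at this
      exact hq0 this.symm
  have hn2 : 2 ≤ n := by
    rcases Nat.lt_or_ge n 2 with hlt | hge; swap
    · exact hge
    · exfalso
      have hn1' : n = 1 := le_antisymm (Nat.lt_succ_iff.mp hlt) hn1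
      have hev' : F =ᶠ[𝓝 z₀] fun z => (z - z₀) * q z := by
        filter_upwards [hqev] with z hz
        rw [hz, hn1', pow_one, smul_eq_mul]
      have hd : deriv F z₀ = q z₀ := by
        rw [hev'.deriv_eq]
        have hder : HasDerivAt (fun z => (z - z₀) * q z)
            (1 * q z₀ + (z₀ - z₀) * deriv q z₀) z₀ :=
          ((hasDerivAt_id z₀).sub_const z₀).mul hqa.differentiableAt.hasDerivAt
        simpa using hder.deriv
      have hdF : deriv F z₀ = deriv φ z₀ := by
        simp only [hF]
        exact deriv_sub_const _
      exact hq0 (by rw [← hd, hdF, hd0])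
  have hnC : (n:ℂ) ≠ 0 := Nat.cast_ne_zero.mpr (by omega)
  obtain ⟨c, hc⟩ := IsAlgClosed.exists_pow_nat_eq (q z₀) (show 0 < n by omega)
  have hcne : c ≠ 0 := by
    intro h0
    apply hq0
    rw [← hc, h0, zero_pow (by omega)]
  set ρ : ℂ → ℂ := fun z => c * Complex.exp (Complex.log (q z / q z₀) / n) with hρ
  have hρa : AnalyticAt ℂ ρ z₀ := by
    have h1 : AnalyticAt ℂ (fun z => q z / q z₀) z₀ := hqa.div analyticAt_const hq0
    have h2 : AnalyticAt ℂ (fun z => Complex.log (q z / q z₀)) z₀ := by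
      apply h1.clog
      simp only [div_self hq0]
      simp [Complex.mem_slitPlane_iff]
    exact analyticAt_const.mul ((h2.div analyticAt_const hnC).cexp)
  have hρz₀ : ρ z₀ ≠ 0 := mul_ne_zero hcne (Complex.exp_ne_zero _)
  have hqev0 : ∀ᶠ z in 𝓝 z₀, q z ≠ 0 := hqa.continuousAt.eventually_ne hq0
  have hρpow : ∀ᶠ z in 𝓝 z₀, ρ z ^ n = q z := by
    filter_upwards [hqev0] with z hz
    have hne' : q z / q z₀ ≠ 0 := div_ne_zero hz hq0
    calc (c * Complex.exp (Complex.log (q z / q z₀) / n)) ^ n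
        = c ^ n * Complex.exp ((n : ℂ) * (Complex.log (q z / q z₀) / n)) := by
          rw [mul_pow, Complex.exp_nat_mul]
      _ = q z₀ * Complex.exp (Complex.log (q z / q z₀)) := by
          rw [hc, mul_div_cancel₀ _ hnC]
      _ = q z₀ * (q z / q z₀) := by rw [Complex.exp_log hne']
      _ = q z := by rw [mul_comm, div_mul_cancel₀ _ hq0]
  set w : ℂ → ℂ := fun z => (z - z₀) * ρ z with hw
  have hwz₀ : w z₀ = 0 := by simp [hw]
  have hFw : ∀ᶠ z in 𝓝 z₀, F z = w z ^ n := by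
    filter_upwards [hqev, hρpow] with z h1 h2
    rw [h1, smul_eq_mul, hw]
    simp only
    rw [mul_pow, h2]
  have hws : HasStrictDerivAt w (ρ z₀) z₀ := by
    obtain ⟨p, hp⟩ := hρa
    have h1 := hp.hasStrictDerivAt
    have h2 : HasStrictDerivAt (fun z => z - z₀) 1 z₀ := (hasStrictDerivAt_id z₀).sub_const z₀
    have h3 := h2.mul h1
    simp at h3; exact h3
  have hmap := hws.map_nhds_eq hρz₀
  obtain ⟨t, htn, htp⟩ := (hFw.and hDn).exists_mem
  have himg : w '' t ∈ 𝓝 (0:ℂ) := by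
    rw [← hwz₀, ← hmap]
    exact image_mem_map htn
  obtain ⟨s, hs, hssub⟩ := Metric.mem_nhds_iff.mp himg
  set ζ : ℂ := Complex.exp ((2 * Real.pi / n : ℝ) * I) with hζ
  have hζabs : ‖ζ‖ = 1 := Complex.norm_exp_ofReal_mul_I _
  have hζpow : ζ ^ n = 1 := by
    rw [hζ, ← Complex.exp_nat_mul]
    have : (n : ℂ) * ((2 * Real.pi / n : ℝ) * I) = 2 * Real.pi * I := by
      push_cast
      field_simp
    rw [this, Complex.exp_two_pi_mul_I]
  have hζne1 : ζ ≠ 1 := by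
    rw [hζ, Ne, Complex.exp_eq_one_iff]
    rintro ⟨m, hm⟩
    have him := congrArg Complex.im hm
    simp [Complex.ofReal_mul] at him
    -- him : 2 * π / n = m * (2 * π)
    have hπ := Real.pi_pos
    have hnR : (2:ℝ) ≤ n := by exact_mod_cast hn2
    have h1n : (1:ℝ)/n = m := by
      have hn0 : (n:ℝ) ≠ 0 := by positivity
      field_simp at him ⊢
      nlinarith [him]
    have h01 : (0:ℝ) < 1/n := by positivity
    have h1' : (1:ℝ)/n < 1 := by
      rw [div_lt_one (by positivity)]; linarith
    rw [h1n] at h01 h1'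
    have : (0:ℤ) < m := by exact_mod_cast h01
    have : (m:ℤ) < 1 := by exact_mod_cast h1'
    omega
  set u : ℂ := ((s/2 : ℝ) : ℂ) with huu
  have hu0 : u ≠ 0 := by
    simp only [huu, Ne, Complex.ofReal_eq_zero]
    positivity
  have humem : u ∈ Metric.ball (0:ℂ) s := by
    simp only [mem_ball, dist_zero_right, huu, Complex.norm_real, Real.norm_eq_abs]
    rw [abs_of_pos (by positivity)]
    linarith
  have hζumem : ζ * u ∈ Metric.ball (0:ℂ) s := by
    simp only [mem_ball, dist_zero_right, norm_mul]
    rw [show ‖ζ‖ = 1 from hζabs]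
    simpa [mem_ball, dist_zero_right] using humem
  obtain ⟨za, hzat, hza⟩ := hssub humem
  obtain ⟨zb, hzbt, hzb⟩ := hssub hζumem
  have hune : u ≠ ζ * u := by
    intro h0
    rcases mul_left_eq_self₀.mp h0.symm with hh | hh
    · exact hζne1 hh
    · exact hu0 hh
  have hzane : za ≠ zb := by
    intro h0
    rw [h0, hzb] at hza
    exact hune hza.symm
  have hφab : φ za = φ zb := by
    have h1 := (htp za hzat).1
    have h2 := (htp zb hzbt).1
    have : F za = F zb := by
      rw [h1, h2, hza, hzb, mul_pow, hζpow, one_mul]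
    simpa [hF, sub_left_inj] using this
  exact hzane (hφi (htp za hzat).2 (htp zb hzbt).2 hφab)

theorem stmt_12 (φ : ℂ → ℂ)
    (hφa : AnalyticOnNhd ℂ φ (ball 0 1)) (hφi : Set.InjOn φ (ball 0 1))
    (hΩ : φ '' ball (0 : ℂ) 1 ≠ Set.univ)
    (lam : ℂ) (hlam : ‖lam‖ = 1)
    (hM : Mdir (φ '' ball (0 : ℂ) 1) lam ≠ ⊤)
    (ε : ℝ) (hε0 : 0 ≤ ε)
    (hε : ε < 1 / (2 * (Mdir (φ '' ball (0 : ℂ) 1) lam).toReal + 1))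
    (h g : ℂ → ℂ)
    (hha : AnalyticOnNhd ℂ h (ball 0 1)) (hga : AnalyticOnNhd ℂ g (ball 0 1))
    (hshear : ∀ z ∈ ball (0 : ℂ) 1, h z - lam ^ 2 * g z = φ z)
    (hdil : ∀ z ∈ ball (0 : ℂ) 1,
      ‖deriv g z‖ ≤ ε * ‖deriv h z‖) :
    Set.InjOn (fun z => h z + conj (g z)) (ball (0 : ℂ) 1) := by
  classical
  intro z₁ hz₁ z₂ hz₂ hfeq
  by_contra hne
  simp only at hfeq
  set Mr : ℝ := (Mdir (φ '' ball (0 : ℂ) 1) lam).toReal with hMr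
  have hMr0 : 0 ≤ Mr := ENNReal.toReal_nonneg
  have hden : (0:ℝ) < 2 * Mr + 1 := by linarith
  have hεM : ε * (2 * Mr + 1) < 1 := by
    rw [lt_div_iff₀ hden] at hε
    linarith
  have hε1 : ε < 1 := by nlinarith
  -- basic algebra
  set b : ℂ := g z₁ - g z₂ with hb
  have hhdiff : h z₁ - h z₂ = -conj b := by
    rw [hb, map_sub]
    linear_combination hfeq
  have hφd : φ z₁ - φ z₂ = -(conj b) - lam ^ 2 * b := by
    rw [← hshear z₁ hz₁, ← hshear z₂ hz₂, hb]
    linear_combination hhdiff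
  have hl1 : conj lam * lam = 1 := by
    rw [mul_comm, Complex.mul_conj', hlam]
    norm_num
  have hexpr : conj lam * (φ z₁ - φ z₂) = -(lam * b + conj (lam * b)) := by
    rw [hφd, map_mul]
    linear_combination (-(lam * b)) * hl1
  have him : (conj lam * (φ z₁ - φ z₂)).im = 0 := by
    rw [hexpr, Complex.add_conj]
    simp
  have habs : ‖φ z₁ - φ z₂‖ ≤ 2 * ‖b‖ := by
    have h1 : ‖conj lam * (φ z₁ - φ z₂)‖ = ‖φ z₁ - φ z₂‖ := by
      rw [norm_mul, Complex.norm_conj, hlam, one_mul]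
    have h2 := Complex.abs_re_le_norm (lam * b)
    have h3 : ‖lam * b‖ = ‖b‖ := by rw [norm_mul, hlam, one_mul]
    rw [h3] at h2
    rw [← h1, hexpr, Complex.add_conj, norm_neg, Complex.norm_real, Real.norm_eq_abs, abs_mul]
    have h4 : |(2:ℝ)| = 2 := by norm_num
    rw [h4]
    linarith
  have hwne : φ z₁ ≠ φ z₂ := fun e => hne (hφi hz₁ hz₂ e)
  have hW₁ : φ z₁ ∈ φ '' ball (0:ℂ) 1 := Set.mem_image_of_mem φ hz₁
  have hW₂ : φ z₂ ∈ φ '' ball (0:ℂ) 1 := Set.mem_image_of_mem φ hz₂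
  -- case ε = 0
  rcases eq_or_lt_of_le hε0 with hε0' | hεpos
  · have hg0 : ∀ x ∈ ball (0:ℂ) 1, ‖deriv g x‖ ≤ 0 := by
      intro x hx
      have := hdil x hx
      rw [← hε0'] at this
      simpa using this
    have hb0 : ‖g z₁ - g z₂‖ ≤ 0 := by
      have := Convex.norm_image_sub_le_of_norm_deriv_le (f := g) (s := ball (0:ℂ) 1)
        (fun x hx => (hga x hx).differentiableAt) hg0 (convex_ball _ _) hz₂ hz₁
      simpa using this
    have hbz : b = 0 := by
      rw [hb]
      exact norm_le_zero_iff.mp hb0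
    apply hwne
    rw [← sub_eq_zero, hφd, hbz]
    simp
  -- main case ε > 0
  have hφderiv : ∀ z ∈ ball (0:ℂ) 1, deriv φ z = deriv h z - lam ^ 2 * deriv g z := by
    intro z hz
    have hev : (fun w => h w - lam ^ 2 * g w) =ᶠ[𝓝 z] φ :=
      Filter.eventuallyEq_of_mem (isOpen_ball.mem_nhds hz) (fun w hw => hshear w hw)
    rw [← hev.deriv_eq, deriv_fun_sub (hha z hz).differentiableAt
      ((hga z hz).differentiableAt.const_mul _),
      deriv_const_mul _ (hga z hz).differentiableAt]
  have hφlow : ∀ z ∈ ball (0:ℂ) 1,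
      (1 - ε) * ‖deriv h z‖ ≤ ‖deriv φ z‖ := by
    intro z hz
    rw [hφderiv z hz]
    have h1 : ‖lam ^ 2 * deriv g z‖ ≤ ε * ‖deriv h z‖ := by
      rw [norm_mul, norm_pow, hlam, one_pow, one_mul]
      exact hdil z hz
    have h2 := norm_sub_norm_le (deriv h z) (lam ^ 2 * deriv g z)
    linarith
  have hφne : ∀ z ∈ ball (0:ℂ) 1, deriv φ z ≠ 0 := fun z hz =>
    deriv_ne_zero_of_injOn hφa hφi hz
  have hφstrict : ∀ z ∈ ball (0:ℂ) 1, HasStrictDerivAt φ (deriv φ z) z := by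
    intro z hz
    obtain ⟨p, hp⟩ := hφa z hz
    have h1 := hp.hasStrictDerivAt
    rwa [h1.hasDerivAt.deriv]
  have hmapn : ∀ z ∈ ball (0:ℂ) 1, Filter.map φ (𝓝 z) = 𝓝 (φ z) := fun z hz =>
    (hφstrict z hz).map_nhds_eq (hφne z hz)
  have hΩopen : IsOpen (φ '' ball (0:ℂ) 1) := by
    rw [isOpen_iff_mem_nhds]
    rintro _ ⟨z, hz, rfl⟩
    rw [← hmapn z hz]
    exact Filter.image_mem_map (isOpen_ball.mem_nhds hz)
  set Φ : ℂ → ℂ := Function.invFunOn φ (ball 0 1) with hΦ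
  have hleft : ∀ z ∈ ball (0:ℂ) 1, Φ (φ z) = z := fun z hz =>
    hφi.leftInvOn_invFunOn hz
  have hright : ∀ y ∈ φ '' ball (0:ℂ) 1, φ (Φ y) = y ∧ Φ y ∈ ball (0:ℂ) 1 := by
    rintro _ ⟨z, hz, rfl⟩
    rw [hleft z hz]
    exact ⟨rfl, hz⟩
  have hΦcont : ∀ z ∈ ball (0:ℂ) 1, ContinuousAt Φ (φ z) := by
    intro z hz
    unfold ContinuousAt
    rw [hleft z hz, ← hmapn z hz, Filter.tendsto_map'_iff]
    exact tendsto_id.congr'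
      (Filter.eventuallyEq_of_mem (isOpen_ball.mem_nhds hz) fun x hx => (hleft x hx).symm)
  set k : ℝ := ε / (1 - ε) with hk
  have hkpos : 0 < k := div_pos hεpos (by linarith)
  set ψ : ℂ → ℂ := fun y => g (Φ y) with hψdef
  have hψd : ∀ y ∈ φ '' ball (0:ℂ) 1, ∃ d : ℂ, HasDerivAt ψ d y ∧ ‖d‖ ≤ k := by
    rintro _ ⟨z, hz, rfl⟩
    have hΦz : Φ (φ z) = z := hleft z hz
    have hΦder : HasDerivAt Φ (deriv φ z)⁻¹ (φ z) := by
      have hev : ∀ᶠ y in 𝓝 (φ z), φ (Φ y) = y := by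
        filter_upwards [hΩopen.mem_nhds (Set.mem_image_of_mem φ hz)] with y hy
        exact (hright y hy).1
      have hder : HasDerivAt φ (deriv φ z) (Φ (φ z)) := by
        rw [hΦz]
        exact (hφa z hz).differentiableAt.hasDerivAt
      exact HasDerivAt.of_local_left_inverse (hΦcont z hz) hder (hφne z hz) hev
    have hgder : HasDerivAt g (deriv g z) (Φ (φ z)) := by
      rw [hΦz]
      exact (hga z hz).differentiableAt.hasDerivAt
    refine ⟨deriv g z * (deriv φ z)⁻¹, hgder.comp (φ z) hΦder, ?_⟩
    have hh0 : 0 < ‖deriv h z‖ := by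
      rcases eq_or_ne (deriv h z) 0 with h0 | h0
      · exfalso
        apply hφne z hz
        have hg0 : deriv g z = 0 := by
          have := hdil z hz
          rw [h0] at this
          simp only [norm_zero, mul_zero] at this
          exact norm_eq_zero.mp (le_antisymm this (norm_nonneg _))
        rw [hφderiv z hz, h0, hg0]
        ring
      · exact norm_pos_iff.mpr h0
    have hφ0 : 0 < ‖deriv φ z‖ :=
      lt_of_lt_of_le (by nlinarith) (hφlow z hz)
    rw [norm_mul, norm_inv,
      ← div_eq_mul_inv, div_le_iff₀ hφ0]
    have h1 := hdil z hz
    have h2 := hφlow z hz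
    have hkε : k * (1 - ε) = ε := div_mul_cancel₀ _ (by linarith)
    nlinarith [mul_le_mul_of_nonneg_left h2 hkpos.le]
  -- path length bounds
  set A : ℝ≥0∞ := ENNReal.ofReal (‖φ z₁ - φ z₂‖) with hA
  have habspos : 0 < ‖φ z₁ - φ z₂‖ := norm_pos_iff.mpr (sub_ne_zero.mpr hwne)
  have hA0 : A ≠ 0 := by
    rw [hA, Ne, ENNReal.ofReal_eq_zero]
    linarith
  have hAtop : A ≠ ⊤ := ENNReal.ofReal_ne_top
  set L : ℝ≥0∞ := pathLengthInf (φ '' ball (0:ℂ) 1) (φ z₁) (φ z₂) with hL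
  have hLA : L / A ≤ Mdir (φ '' ball (0 : ℂ) 1) lam := by
    rw [Mdir]
    exact le_iSup_of_le (φ z₁) (le_iSup_of_le (φ z₂) (le_iSup_of_le hW₁
      (le_iSup_of_le hW₂ (le_iSup_of_le hwne (le_iSup_of_le him le_rfl)))))
  have hLM : L ≤ Mdir (φ '' ball (0 : ℂ) 1) lam * A :=
    (ENNReal.div_le_iff_le_mul (Or.inl hA0) (Or.inl hAtop)).mp hLA
  have hk0' : ENNReal.ofReal k ≠ 0 := by
    rw [Ne, ENNReal.ofReal_eq_zero]; linarith
  have hktop : ENNReal.ofReal k ≠ ⊤ := ENNReal.ofReal_ne_top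
  have hstep : ∀ γ : ℝ → ℂ, ContinuousOn γ (Set.Icc 0 1) → γ 0 = φ z₁ → γ 1 = φ z₂ →
      Set.MapsTo γ (Set.Icc 0 1) (φ '' ball (0:ℂ) 1) →
      ENNReal.ofReal (‖b‖) ≤ ENNReal.ofReal k * eVariationOn γ (Set.Icc 0 1) := by
    intro γ hc h0 h1 hm
    have := curve_bound hΩopen hψd hc hm
    rw [h0, h1] at this
    have he1 : ψ (φ z₁) = g z₁ := by rw [hψdef]; simp only; rw [hleft z₁ hz₁]
    have he2 : ψ (φ z₂) = g z₂ := by rw [hψdef]; simp only; rw [hleft z₂ hz₂]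
    rw [he1, he2] at this
    calc ENNReal.ofReal (‖b‖) = edist (g z₂) (g z₁) := by
          rw [edist_dist, dist_eq_norm, hb, norm_sub_rev]
      _ ≤ ENNReal.ofReal k * eVariationOn γ (Set.Icc 0 1) := this
  have hdiv : ENNReal.ofReal (‖b‖) / ENNReal.ofReal k ≤ L := by
    rw [hL, pathLengthInf]
    refine le_iInf fun γ => le_iInf fun hc => le_iInf fun h0 => le_iInf fun h1 =>
      le_iInf fun hm => ?_
    rw [ENNReal.div_le_iff_le_mul (Or.inl hk0') (Or.inl hktop), mul_comm]
    exact hstep γ hc h0 h1 hm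
  have hbL : ENNReal.ofReal (‖b‖) ≤ ENNReal.ofReal k * L := by
    have := (ENNReal.div_le_iff_le_mul (Or.inl hk0') (Or.inl hktop)).mp hdiv
    rwa [mul_comm] at this
  have hchain : ENNReal.ofReal (‖b‖) ≤
      ENNReal.ofReal k * (Mdir (φ '' ball (0 : ℂ) 1) lam *
        ENNReal.ofReal (2 * ‖b‖)) := by
    refine hbL.trans (mul_le_mul_right (hLM.trans (mul_le_mul_right ?_ _)) _)
    exact ENNReal.ofReal_le_ofReal habs
  have hfin : ENNReal.ofReal k * (Mdir (φ '' ball (0 : ℂ) 1) lam *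
      ENNReal.ofReal (2 * ‖b‖)) ≠ ⊤ :=
    ENNReal.mul_ne_top hktop (ENNReal.mul_ne_top hM ENNReal.ofReal_ne_top)
  have hreal : ‖b‖ ≤ k * (Mr * (2 * ‖b‖)) := by
    have := ENNReal.toReal_mono hfin hchain
    rw [ENNReal.toReal_ofReal (norm_nonneg _), ENNReal.toReal_mul,
      ENNReal.toReal_mul, ENNReal.toReal_ofReal hkpos.le,
      ENNReal.toReal_ofReal (by positivity)] at this
    exact this
  have hMkey : k * (2 * Mr) < 1 := by
    rw [hk, div_mul_eq_mul_div, div_lt_one (by linarith)]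
    nlinarith
  have hb0 : ‖b‖ = 0 := by
    by_contra habs0
    have hbpos : 0 < ‖b‖ :=
      lt_of_le_of_ne (norm_nonneg _) (Ne.symm habs0)
    nlinarith
  have hbz : b = 0 := norm_eq_zero.mp hb0
  apply hwne
  rw [← sub_eq_zero, hφd, hbz]
  simp
end
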